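/- Every terminating oracle sequential algorithm induces a continuous functional: for all inputs u and oracles f in the class on which A terminates, there exists a finite list x_0,...,x_{m-1} of points such that any oracle g agreeing with f on these points satisfies Φ_A(u,f) = Φ_A(u,g). -/

import Mathlib

section
variable {U V X Y R : Type*}
variable (QA : Set R) (E : Set (R × Option Y)) (ρ : U → R) (ξ : R → X)
variable (πA : R × Option Y → V)
variable (step : R × Option Y → Option (R × Option Y))

/-- Reachability on oracle `f` in an OSA. -/
inductive Reaches (f : X → Y) : R × Option Y → R × Option Y → Prop
  | refl (s : R × Option Y) : Reaches f s s
  | oracle {r : R} {t : R × Option Y} : (r, (none : Option Y)) ∉ E → r ∈ QA →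
      Reaches f (r, some (f (ξ r))) t → Reaches f (r, none) t
  | step {s s' t : R × Option Y} : s ∉ E → (s.2 = none → s.1 ∉ QA) → step s = some s' →
      Reaches f s' t → Reaches f s t

/-- Agreement lemma: the path of a run only depends on finitely many oracle values. -/
lemma reaches_agree {f : X → Y} {s t : R × Option Y}
    (h : Reaches QA E ξ step f s t) :
    ∃ l : List X, ∀ g : X → Y, (∀ x ∈ l, g x = f x) → Reaches QA E ξ step g s t := by
  induction h with
  | refl s => exact ⟨[], fun g _ => Reaches.refl s⟩
  | oracle hnE hQ _ ih =>
    obtain ⟨l, hl⟩ := ih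
    rename_i r _ _
    refine ⟨ξ r :: l, fun g hg => ?_⟩
    have hx : g (ξ r) = f (ξ r) := hg _ List.mem_cons_self
    exact Reaches.oracle hnE hQ (hx ▸ hl g fun x hx' => hg x (List.mem_cons_of_mem _ hx'))
  | step hnE hnQ hstep _ ih =>
    obtain ⟨l, hl⟩ := ih
    exact ⟨l, fun g hg => Reaches.step hnE hnQ hstep (hl g hg)⟩

/-- Uniqueness of the end state reached. -/
lemma reaches_unique {f : X → Y} {s t t' : R × Option Y}
    (h : Reaches QA E ξ step f s t) (ht : t ∈ E)
    (h' : Reaches QA E ξ step f s t') (ht' : t' ∈ E) : t = t' := by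
  induction h with
  | refl s =>
    cases h' with
    | refl => rfl
    | oracle hnE _ _ => exact absurd ht hnE
    | step hnE _ _ _ => exact absurd ht hnE
  | oracle hnE hQ _ ih =>
    cases h' with
    | refl => exact absurd ht' hnE
    | oracle _ _ h2 => exact ih ht h2
    | step _ hnQ _ _ => exact absurd hQ (hnQ rfl)
  | step hnE hnQ hstep _ ih =>
    cases h' with
    | refl => exact absurd ht' hnE
    | oracle _ hQ _ => exact absurd hQ (hnQ rfl)
    | step _ _ hstep' h2 =>
      rw [hstep] at hstep'
      exact ih ht (Option.some_injective _ hstep' ▸ h2)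

/-- Continuity: a terminating OSA induces a continuous functional.  For every input `u` and
oracle `f` in the class `F` on which the algorithm terminates, there is a finite list of query
points such that any oracle `g` agreeing with `f` on those points yields the same output
`Φ_A(u,g) = Φ_A(u,f)`. -/
theorem continuity (F : Set (X → Y))
    (hterm : ∀ (u : U), ∀ f ∈ F, ∃ t ∈ E, Reaches QA E ξ step f (ρ u, none) t) :
    ∀ (u : U), ∀ f ∈ F, ∃ l : List X, ∀ g : X → Y, (∀ x ∈ l, g x = f x) →
      ∀ v : V, (∃ t ∈ E, Reaches QA E ξ step f (ρ u, none) t ∧ πA t = v)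
        ↔ (∃ t ∈ E, Reaches QA E ξ step g (ρ u, none) t ∧ πA t = v) := by
  intro u f hf
  obtain ⟨t, htE, hR⟩ := hterm u f hf
  obtain ⟨l, hl⟩ := reaches_agree QA E ξ step hR
  refine ⟨l, fun g hg v => ?_⟩
  have hRg := hl g hg
  constructor
  · rintro ⟨t', ht'E, hR', hv⟩
    exact ⟨t, htE, hRg, (reaches_unique QA E ξ step hR htE hR' ht'E) ▸ hv⟩
  · rintro ⟨t', ht'E, hR', hv⟩
    exact ⟨t, htE, hR, (reaches_unique QA E ξ step hRg htE hR' ht'E) ▸ hv⟩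

end
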